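/- Let X and Y be nonempty compact convex subsets of Hausdorff real topological vector spaces, let g : X×Y→ℝ be continuous, and suppose the zero-sum game (X,Y,g) has a saddle point with value w. Let (u0,v0) ∈ ℝ² be outside options admitting a (u0,v0)-feasible contract, i.e., some (x,y) with g(x,y) ≥ u0 and -g(x,y) ≥ v0. Then there exists a (u0,v0)-constrained Nash equilibrium (x̂,ŷ) with g(x̂,ŷ) = median(u0, -v0, w). -/

import Mathlib

/-- The median of three real numbers. -/
noncomputable def median3 (a b c : ℝ) : ℝ := max (min a b) (min (max a b) c)

/-- Helper: if player 1's payoffs at `y0` are all at most `w' < u0`, and some `x1`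
achieves at least `u0` at `y1`, then along the segment from `y0` to `y1` there is a
`yhat` where the maximum of `x ↦ g x yhat` over `X` equals exactly `u0`. -/
lemma exists_max_slice_eq
    {E F : Type*}
    [TopologicalSpace E]
    [AddCommGroup F] [Module ℝ F] [TopologicalSpace F]
    [IsTopologicalAddGroup F] [ContinuousSMul ℝ F]
    (X : Set E) (Y : Set F) (hXne : X.Nonempty)
    (hXcomp : IsCompact X) (hYconv : Convex ℝ Y)
    (g : E → F → ℝ)
    (hg : ContinuousOn (fun p : E × F => g p.1 p.2) (X ×ˢ Y))
    (y0 y1 : F) (hy0 : y0 ∈ Y) (hy1 : y1 ∈ Y)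
    (u0 w' : ℝ) (h0 : ∀ x ∈ X, g x y0 ≤ w') (hw' : w' < u0)
    (x1 : E) (hx1 : x1 ∈ X) (h1 : u0 ≤ g x1 y1) :
    ∃ xhat ∈ X, ∃ yhat ∈ Y, g xhat yhat = u0 ∧ ∀ x ∈ X, g x yhat ≤ u0 := by
  -- the segment
  set c : ℝ → F := fun t => (1 - t) • y0 + t • y1 with hc
  have hcmem : ∀ t ∈ Set.Icc (0:ℝ) 1, c t ∈ Y := fun t ht =>
    hYconv hy0 hy1 (by linarith [ht.2]) ht.1 (by ring)
  have hccont : Continuous c :=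
    ((continuous_const.sub continuous_id).smul continuous_const).add
      (continuous_id.smul continuous_const)
  -- slice continuity
  have hslice : ∀ y ∈ Y, ContinuousOn (fun x => g x y) X := by
    intro y hy
    exact hg.comp (continuous_id.prodMk continuous_const).continuousOn
      (fun x hx => Set.mk_mem_prod hx hy)
  set φ : ℝ → ℝ := fun t => sSup ((fun x => g x (c t)) '' X) with hφ
  haveI : CompactSpace ↥X := isCompact_iff_compactSpace.mp hXcomp
  -- continuity of φ on Icc 0 1
  have hφcont : ContinuousOn φ (Set.Icc (0:ℝ) 1) := by
    rw [continuousOn_iff_continuous_restrict]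
    have key : Continuous fun t : ↥(Set.Icc (0:ℝ) 1) =>
        sSup ((fun x : ↥X => g x (c t)) '' Set.univ) := by
      apply isCompact_univ.continuous_sSup
      show Continuous ((fun p : E × F => g p.1 p.2) ∘
            (fun q : ↥(Set.Icc (0:ℝ) 1) × ↥X => ((q.2 : E), c q.1)))
      exact hg.comp_continuous
        (((continuous_subtype_val.comp continuous_snd)).prodMk
          (hccont.comp (continuous_subtype_val.comp continuous_fst)))
        (fun q => Set.mk_mem_prod q.2.2 (hcmem _ q.1.2))
    have himg : ∀ t : ↥(Set.Icc (0:ℝ) 1),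
        ((fun x : ↥X => g x (c t)) '' Set.univ) = ((fun x => g x (c (t:ℝ))) '' X) := by
      intro t
      ext r
      constructor
      · rintro ⟨x, -, rfl⟩; exact ⟨x, x.2, rfl⟩
      · rintro ⟨x, hx, rfl⟩; exact ⟨⟨x, hx⟩, Set.mem_univ _, rfl⟩
    have hres : Set.restrict (Set.Icc (0:ℝ) 1) φ
        = fun t : ↥(Set.Icc (0:ℝ) 1) => sSup ((fun x : ↥X => g x (c t)) '' Set.univ) :=
      funext fun t => by rw [himg t]; rfl
    rw [show (Set.Icc (0:ℝ) 1).domRestrict φ = _ from hres]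
    exact key
  -- endpoint values
  have hbdd : ∀ y ∈ Y, BddAbove ((fun x => g x y) '' X) := fun y hy =>
    hXcomp.bddAbove_image (hslice y hy)
  have hne : ∀ y : F, ((fun x => g x y) '' X).Nonempty := fun y => hXne.image _
  have hc0 : c 0 = y0 := by simp [hc]
  have hc1 : c 1 = y1 := by simp [hc]
  have hφ0 : φ 0 < u0 := by
    rw [hφ]
    simp only [hc0]
    exact lt_of_le_of_lt (csSup_le (hne y0) (by rintro r ⟨x, hx, rfl⟩; exact h0 x hx)) hw'
  have hφ1 : u0 ≤ φ 1 := by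
    rw [hφ]
    simp only [hc1]
    exact le_trans h1 (le_csSup (hbdd y1 hy1) ⟨x1, hx1, rfl⟩)
  -- IVT
  obtain ⟨t, ht, hφt⟩ := intermediate_value_Icc (zero_le_one) hφcont
    ⟨le_of_lt hφ0, hφ1⟩
  -- the maximizer
  have hymem : c t ∈ Y := hcmem t ht
  obtain ⟨xhat, hxhat, hmax⟩ := hXcomp.exists_isMaxOn hXne (hslice _ hymem)
  refine ⟨xhat, hxhat, c t, hymem, ?_, ?_⟩
  · have : φ t = g xhat (c t) := by
      apply le_antisymm
      · exact csSup_le (hne _) (by rintro r ⟨x, hx, rfl⟩; exact hmax hx)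
      · exact le_csSup (hbdd _ hymem) ⟨xhat, hxhat, rfl⟩
    rw [← this, hφt]
  · intro x hx
    calc g x (c t) ≤ g xhat (c t) := hmax hx
      _ = u0 := by
        have : φ t = g xhat (c t) := by
          apply le_antisymm
          · exact csSup_le (hne _) (by rintro r ⟨x', hx', rfl⟩; exact hmax hx')
          · exact le_csSup (hbdd _ hymem) ⟨xhat, hxhat, rfl⟩
        rw [← this, hφt]

/-- In a zero-sum game with a saddle point of value `w`, for any outside options
`(u0,v0)` admitting a feasible contract there is a `(u0,v0)`-constrained Nash
equilibrium whose payoff to player 1 is `median (u0, -v0, w)`. -/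
theorem zero_sum_constrained_equilibrium_median
    {E F : Type*}
    [AddCommGroup E] [Module ℝ E] [TopologicalSpace E]
    [IsTopologicalAddGroup E] [ContinuousSMul ℝ E] [T2Space E]
    [AddCommGroup F] [Module ℝ F] [TopologicalSpace F]
    [IsTopologicalAddGroup F] [ContinuousSMul ℝ F] [T2Space F]
    (X : Set E) (Y : Set F) (hXne : X.Nonempty) (hYne : Y.Nonempty)
    (hXcomp : IsCompact X) (hYcomp : IsCompact Y)
    (hXconv : Convex ℝ X) (hYconv : Convex ℝ Y)
    (g : E → F → ℝ)
    (hg : ContinuousOn (fun p : E × F => g p.1 p.2) (X ×ˢ Y))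
    (xs : E) (ys : F) (hxs : xs ∈ X) (hys : ys ∈ Y)
    (hsaddle : (∀ x ∈ X, g x ys ≤ g xs ys) ∧ (∀ y ∈ Y, g xs ys ≤ g xs y))
    (w : ℝ) (hw : g xs ys = w)
    (u0 v0 : ℝ)
    (hfeas : ∃ x ∈ X, ∃ y ∈ Y, u0 ≤ g x y ∧ v0 ≤ -g x y) :
    ∃ xhat ∈ X, ∃ yhat ∈ Y,
      u0 ≤ g xhat yhat ∧ v0 ≤ -g xhat yhat ∧
      (∀ x ∈ X, g xhat yhat < g x yhat → -g x yhat < v0) ∧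
      (∀ y ∈ Y, -g xhat yhat < -g xhat y → g xhat y < u0) ∧
      g xhat yhat = median3 u0 (-v0) w := by
  obtain ⟨x1, hx1, y1, hy1, hu1, hv1⟩ := hfeas
  have huv : u0 ≤ -v0 := le_trans hu1 (by linarith)
  rcases lt_or_ge w u0 with hwu | hwu
  · -- case w < u0 : payoff u0
    have hmed : median3 u0 (-v0) w = u0 := by
      unfold median3
      rw [min_eq_left huv, max_eq_right huv, min_eq_right (le_trans (le_of_lt hwu) huv)]
      exact max_eq_left (le_of_lt hwu)
    obtain ⟨xhat, hxhat, yhat, hyhat, heq, hmax⟩ :=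
      exists_max_slice_eq X Y hXne hXcomp hYconv g hg ys y1 hys hy1 u0 w
        (fun x hx => hw ▸ hsaddle.1 x hx) hwu x1 hx1 hu1
    refine ⟨xhat, hxhat, yhat, hyhat, le_of_eq heq.symm, by linarith, ?_, ?_, by
      rw [heq, hmed]⟩
    · intro x hx hlt
      exact absurd (hmax x hx) (by rw [heq] at hlt; linarith)
    · intro y _ hlt
      rw [heq] at hlt; linarith
  rcases lt_or_ge (-v0) w with hwv | hwv
  · -- case -v0 < w : payoff -v0
    have hmed : median3 u0 (-v0) w = -v0 := by
      unfold median3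
      rw [min_eq_left huv, max_eq_right huv, min_eq_left (le_of_lt hwv)]
      exact max_eq_right huv
    have hgswap : ContinuousOn (fun p : F × E => -g p.2 p.1) (Y ×ˢ X) := by
      have : (fun p : F × E => -g p.2 p.1)
          = (fun r : ℝ => -r) ∘ (fun p : E × F => g p.1 p.2) ∘ Prod.swap := rfl
      rw [this]
      exact (continuous_neg.comp_continuousOn
        (hg.comp continuous_swap.continuousOn (fun p hp => ⟨hp.2, hp.1⟩)))
    obtain ⟨yhat, hyhat, xhat, hxhat, heq, hmax⟩ :=
      exists_max_slice_eq Y X hYne hYcomp hXconv (fun y x => -g x y) hgswap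
        xs x1 hxs hx1 v0 (-w)
        (fun y hy => show -g xs y ≤ -w by have := hsaddle.2 y hy; linarith)
        (by linarith) y1 hy1 (show v0 ≤ -g x1 y1 from hv1)
    have heq' : g xhat yhat = -v0 := by linarith
    refine ⟨xhat, hxhat, yhat, hyhat, by linarith, by linarith, ?_, ?_, by
      rw [heq', hmed]⟩
    · intro x _ hlt
      rw [heq'] at hlt; linarith
    · intro y hy hlt
      exact absurd (hmax y hy) (by linarith)
  · -- case u0 ≤ w ≤ -v0 : the saddle point itself
    have hmed : median3 u0 (-v0) w = w := by
      unfold median3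
      rw [min_eq_left huv, max_eq_right huv, min_eq_right hwv]
      exact max_eq_right hwu
    refine ⟨xs, hxs, ys, hys, by rw [hw]; exact hwu, by rw [hw]; linarith, ?_, ?_, by
      rw [hw, hmed]⟩
    · intro x hx hlt
      exact absurd (hsaddle.1 x hx) (not_le.mpr hlt)
    · intro y hy hlt
      have := hsaddle.2 y hy
      linarith
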